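/- Let m, n be positive integers with m < n and n ≠ 2m. Then the polynomial x^n + 2x^m + 1 has a complex root of absolute value different from 1. -/

import Mathlib

open Polynomial

private lemma aux_abs_one (w : ℂ) (hw : ‖w‖ = 1) (h2 : ‖w + 1‖ = 2) :
    w = 1 := by
  have h1 : Complex.normSq w = 1 := by
    rw [← Complex.sq_norm, hw]; norm_num
  have h4 : Complex.normSq (w + 1) = 4 := by
    rw [← Complex.sq_norm, h2]; norm_num
  simp only [Complex.normSq_apply, Complex.add_re, Complex.add_im, Complex.one_re,
    Complex.one_im] at h1 h4
  have hre : w.re = 1 := by nlinarith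
  have him : w.im = 0 := by nlinarith
  apply Complex.ext <;> simp [hre, him]

theorem stmt1 (m n : ℕ) (hm : 0 < m) (hmn : m < n) (hne : n ≠ 2 * m) :
    ∃ z : ℂ, z ^ n + 2 * z ^ m + 1 = 0 ∧ ‖z‖ ≠ 1 := by
  by_contra hcon
  push_neg at hcon
  -- every root lies on the unit circle, hence z^n = 1 and z^m = -1
  have hroot : ∀ z : ℂ, z ^ n + 2 * z ^ m + 1 = 0 → z ^ n = 1 ∧ z ^ m = -1 := by
    intro z hz
    have habs : ‖z‖ = 1 := hcon z hz
    have habsm : ‖z ^ m‖ = 1 := by simp [map_pow, habs]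
    have habsn : ‖z ^ n‖ = 1 := by simp [map_pow, habs]
    have hsum : z ^ n + 1 = -(2 * z ^ m) := by linear_combination hz
    have habs2 : ‖z ^ n + 1‖ = 2 := by
      rw [hsum]
      simp [map_mul, habsm]
    have hzn : z ^ n = 1 := aux_abs_one _ habsn habs2
    refine ⟨hzn, ?_⟩
    have : 2 * z ^ m = -2 := by rw [hzn] at hsum; linear_combination hsum
    linear_combination this / 2
  set P : ℂ[X] := X ^ n + (C 2 * X ^ m + 1) with hPdef
  have hdeglt : (C 2 * X ^ m + (1 : ℂ[X])).degree < (n : WithBot ℕ) := by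
    apply lt_of_le_of_lt (degree_add_le _ _)
    apply max_lt
    · rw [degree_C_mul_X_pow m (by norm_num : (2:ℂ) ≠ 0)]
      exact_mod_cast hmn
    · exact lt_of_le_of_lt degree_one_le (by exact_mod_cast hm.trans hmn)
  have hmonic : P.Monic := monic_X_pow_add hdeglt
  have hPne : P ≠ 0 := hmonic.ne_zero
  have hdeg : P.degree = n := by
    rw [hPdef, degree_add_eq_left_of_degree_lt (by rw [degree_X_pow]; exact hdeglt), degree_X_pow]
  have hnd : P.natDegree = n := natDegree_eq_of_degree_eq_some hdeg
  have heval : ∀ z : ℂ, P.eval z = z ^ n + 2 * z ^ m + 1 := by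
    intro z; simp [hPdef]; ring
  have hcard : Multiset.card P.roots = n := by
    rw [splits_iff_card_roots.mp (IsAlgClosed.splits P), hnd]
  -- distinct roots are m-th roots of -1
  have hsub : P.roots.toFinset ⊆ (nthRoots m (-1 : ℂ)).toFinset := by
    intro z hz
    rw [Multiset.mem_toFinset] at hz ⊢
    rw [mem_nthRoots hm]
    rw [mem_roots hPne] at hz
    have := (hroot z (by rw [← heval z]; exact hz)).2
    exact this
  have hfcard : P.roots.toFinset.card ≤ m := by
    apply le_trans (Finset.card_le_card hsub)
    exact le_trans (Multiset.toFinset_card_le _) (card_nthRoots m (-1))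
  have hnotnodup : ¬ P.roots.Nodup := by
    intro hnd'
    have := Multiset.toFinset_card_of_nodup hnd'
    omega
  obtain ⟨z, hz2⟩ : ∃ z, 2 ≤ P.roots.count z := by
    by_contra h
    push_neg at h
    exact hnotnodup (Multiset.nodup_iff_count_le_one.mpr (fun a => by have := h a; omega))
  rw [count_roots] at hz2
  have hzroot : P.IsRoot z := by
    rw [← rootMultiplicity_pos hPne]; omega
  have hdvd : (X - C z) ^ 2 ∣ P := by
    apply dvd_trans _ (pow_rootMultiplicity_dvd P z)
    exact pow_dvd_pow _ hz2
  obtain ⟨q, hq⟩ := hdvd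
  have hderiv : (derivative P).eval z = 0 := by
    rw [hq]
    simp [derivative_mul, derivative_pow]
  have hzeq : z ^ n + 2 * z ^ m + 1 = 0 := by rw [← heval]; exact hzroot
  obtain ⟨hzn, hzm⟩ := hroot z hzeq
  have hderiv2 : (n : ℂ) * z ^ (n - 1) + 2 * ((m : ℂ) * z ^ (m - 1)) = 0 := by
    rw [hPdef] at hderiv
    simpa [derivative_X_pow] using hderiv
  have hmul : (n : ℂ) * z ^ n + 2 * ((m : ℂ) * z ^ m) = 0 := by
    have h1 : z ^ (n - 1) * z = z ^ n := by
      rw [← pow_succ]; congr 1; omega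
    have h2 : z ^ (m - 1) * z = z ^ m := by
      rw [← pow_succ]; congr 1; omega
    calc (n : ℂ) * z ^ n + 2 * ((m : ℂ) * z ^ m)
        = ((n : ℂ) * z ^ (n - 1) + 2 * ((m : ℂ) * z ^ (m - 1))) * z := by
          rw [← h1, ← h2]; ring
      _ = 0 := by rw [hderiv2]; ring
  rw [hzn, hzm] at hmul
  have : (n : ℂ) = 2 * m := by linear_combination hmul
  exact hne (by exact_mod_cast this)
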